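/- Let H₂ : 𝔻 → ℂ be continuous on the closed unit disk, holomorphic on the interior, with |H₂(z)| = 1 for all |z| = 1 and |H₂(z)| ≤ 1 on 𝔻, and suppose the restriction of H₂ to the unit circle has winding number 0 as a map S¹ → S¹. Then H₂ is constant. -/

import Mathlib

open Complex Metric Set

private lemma int_valued_eq_zero {g : ℝ → ℝ} (hg : Continuous g)
    (hint : ∀ φ : ℝ, ∃ n : ℤ, g φ = n) (h0 : g 0 = 0) {T : ℝ} (hT : 0 ≤ T) : g T = 0 := by
  by_contra hne
  obtain ⟨n, hn⟩ := hint T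
  have hn0 : n ≠ 0 := by rintro rfl; exact hne (by simpa using hn)
  have key : ∃ φ ∈ Icc 0 T, g φ = 1/2 ∨ g φ = -(1/2) := by
    rcases hn0.lt_or_gt with h | h
    · have hgT : g T ≤ -1 := by
        rw [hn]; have : n ≤ -1 := by omega
        exact_mod_cast this
      have hmem : -(1/2 : ℝ) ∈ Icc (g T) (g 0) := by
        constructor <;> [linarith; (rw [h0]; norm_num)]
      obtain ⟨φ, hφ, hval⟩ := intermediate_value_Icc' hT hg.continuousOn hmem
      exact ⟨φ, hφ, Or.inr hval⟩
    · have hgT : (1:ℝ) ≤ g T := by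
        rw [hn]; exact_mod_cast h
      have hmem : (1/2 : ℝ) ∈ Icc (g 0) (g T) := by
        constructor <;> [(rw [h0]; norm_num); linarith]
      obtain ⟨φ, hφ, hval⟩ := intermediate_value_Icc hT hg.continuousOn hmem
      exact ⟨φ, hφ, Or.inl hval⟩
  obtain ⟨φ, -, hval⟩ := key
  obtain ⟨m, hm⟩ := hint φ
  rcases hval with hval | hval <;> rw [hm] at hval
  · have : (2 * m : ℤ) = 1 := by exact_mod_cast (by linarith : (2*m : ℝ) = 1)
    omega
  · have : (2 * m : ℤ) = -1 := by exact_mod_cast (by linarith : (2*m : ℝ) = -1)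
    omega

private lemma zeroset_finite {f : ℂ → ℂ} (hd : DifferentiableOn ℂ f (Metric.ball 0 1))
    {s : ℝ} (hs1 : s < 1) (hnz : ∃ w ∈ Metric.ball (0:ℂ) 1, f w ≠ 0) :
    {z ∈ Metric.closedBall (0:ℂ) s | f z = 0}.Finite := by
  set Z := {z ∈ Metric.closedBall (0:ℂ) s | f z = 0} with hZ
  by_contra hinf
  have hinf' : Z.Infinite := hinf
  obtain ⟨x, hxK, hacc⟩ := hinf'.exists_accPt_of_subset_isCompact
    (isCompact_closedBall (0:ℂ) s) (Set.sep_subset _ _)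
  have hx1 : x ∈ Metric.ball (0:ℂ) 1 := by
    rw [mem_ball_zero_iff]
    exact lt_of_le_of_lt (mem_closedBall_zero_iff.mp hxK) hs1
  have hfreq : ∃ᶠ z in nhdsWithin x {x}ᶜ, f z = 0 := by
    rw [accPt_iff_frequently] at hacc
    rw [frequently_nhdsWithin_iff]
    exact hacc.mono (fun y hy => ⟨hy.2.2, hy.1⟩)
  have hEq := AnalyticOnNhd.eqOn_zero_of_preconnected_of_frequently_eq_zero
    (hd.analyticOnNhd isOpen_ball) (convex_ball (0:ℂ) 1).isPreconnected hx1 hfreq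
  obtain ⟨w, hw, hwne⟩ := hnz
  exact hwne (hEq hw)

private lemma arg_principle {s : ℝ} (hs0 : 0 < s) (hs1 : s < 1) :
    ∀ n : ℕ, ∀ f : ℂ → ℂ, DifferentiableOn ℂ f (Metric.ball 0 1) →
    (∀ z ∈ Metric.sphere (0:ℂ) s, f z ≠ 0) →
    {z ∈ Metric.closedBall (0:ℂ) s | f z = 0}.ncard ≤ n →
    ∃ m : ℕ, (∮ z in C(0, s), deriv f z / f z) = 2 * Real.pi * Complex.I * m ∧
      ({z ∈ Metric.closedBall (0:ℂ) s | f z = 0}.Nonempty → 1 ≤ m) := by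
  intro n
  induction n with
  | zero =>
    intro f hd hsph hcard
    -- zero set is empty
    have hsmem : (s:ℂ) ∈ Metric.sphere (0:ℂ) s := by
      simp [mem_sphere_zero_iff_norm, Complex.norm_real, abs_of_pos hs0]
    have hs1mem : (s:ℂ) ∈ Metric.ball (0:ℂ) 1 := by
      simp only [mem_ball_zero_iff, Complex.norm_real, Real.norm_eq_abs, abs_of_pos hs0]
      exact hs1
    have hfin := zeroset_finite hd hs1 ⟨(s:ℂ), hs1mem, hsph _ hsmem⟩
    have hempty : {z ∈ Metric.closedBall (0:ℂ) s | f z = 0} = ∅ := by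
      rw [← Set.ncard_eq_zero hfin]
      omega
    refine ⟨0, ?_, fun hne => absurd hne (by rw [hempty]; exact Set.not_nonempty_empty)⟩
    have hzero : (∮ z in C(0, s), deriv f z / f z) = 0 := by
      apply circleIntegral_eq_zero_of_differentiable_on_off_countable hs0.le Set.countable_empty
      · have hsub : Metric.closedBall (0:ℂ) s ⊆ Metric.ball 0 1 := closedBall_subset_ball hs1
        refine ContinuousOn.div
          (((hd.analyticOnNhd isOpen_ball).deriv.continuousOn).mono hsub)
          (hd.continuousOn.mono hsub) ?_
        intro z hz h0
        have hmm : z ∈ ({z ∈ Metric.closedBall (0:ℂ) s | f z = 0} : Set ℂ) := ⟨hz, h0⟩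
        rw [hempty] at hmm
        exact absurd hmm (Set.notMem_empty z)
      · intro z hz
        have hz1 : z ∈ Metric.ball (0:ℂ) 1 := ball_subset_ball hs1.le hz.1
        have hzc : z ∈ Metric.closedBall (0:ℂ) s := ball_subset_closedBall hz.1
        refine DifferentiableAt.div
          ((hd.analyticOnNhd isOpen_ball).deriv z hz1).differentiableAt
          (hd.differentiableAt (isOpen_ball.mem_nhds hz1)) ?_
        intro h0
        have hmm : z ∈ ({z ∈ Metric.closedBall (0:ℂ) s | f z = 0} : Set ℂ) := ⟨hzc, h0⟩
        rw [hempty] at hmm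
        exact absurd hmm (Set.notMem_empty z)
    rw [hzero]; simp
  | succ n IH =>
    intro f hd hsph hcard
    set Z := {z ∈ Metric.closedBall (0:ℂ) s | f z = 0} with hZdef
    have hsmem : (s:ℂ) ∈ Metric.sphere (0:ℂ) s := by
      simp [mem_sphere_zero_iff_norm, Complex.norm_real, abs_of_pos hs0]
    have hs1mem : (s:ℂ) ∈ Metric.ball (0:ℂ) 1 := by
      simp only [mem_ball_zero_iff, Complex.norm_real, Real.norm_eq_abs, abs_of_pos hs0]
      exact hs1
    have hfin : Z.Finite := zeroset_finite hd hs1 ⟨(s:ℂ), hs1mem, hsph _ hsmem⟩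
    by_cases hZ : Z = ∅
    · -- same as base case : reduce to IH-independent computation via `zero` proof idea
      refine ⟨0, ?_, fun hne => absurd hne (by rw [hZ]; exact Set.not_nonempty_empty)⟩
      have hzero : (∮ z in C(0, s), deriv f z / f z) = 0 := by
        apply circleIntegral_eq_zero_of_differentiable_on_off_countable hs0.le Set.countable_empty
        · have hsub : Metric.closedBall (0:ℂ) s ⊆ Metric.ball 0 1 := closedBall_subset_ball hs1
          refine ContinuousOn.div
            (((hd.analyticOnNhd isOpen_ball).deriv.continuousOn).mono hsub)
            (hd.continuousOn.mono hsub) ?_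
          intro z hz h0
          have : z ∈ Z := ⟨hz, h0⟩
          rw [hZ] at this; exact absurd this (Set.notMem_empty z)
        · intro z hz
          have hz1 : z ∈ Metric.ball (0:ℂ) 1 := ball_subset_ball hs1.le hz.1
          refine DifferentiableAt.div
            ((hd.analyticOnNhd isOpen_ball).deriv z hz1).differentiableAt
            (hd.differentiableAt (isOpen_ball.mem_nhds hz1)) ?_
          intro h0
          have : z ∈ Z := ⟨ball_subset_closedBall hz.1, h0⟩
          rw [hZ] at this; exact absurd this (Set.notMem_empty z)
      rw [hzero]; simp
    · obtain ⟨z₀, hz₀c, hz₀f⟩ := Set.nonempty_iff_ne_empty.mpr hZ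
      have hz₀b : z₀ ∈ Metric.ball (0:ℂ) s := by
        rcases (mem_closedBall_zero_iff.mp hz₀c).lt_or_eq with h | h
        · exact mem_ball_zero_iff.mpr h
        · exact absurd hz₀f (hsph z₀ (by rwa [mem_sphere_zero_iff_norm]))
      have hz₀1 : z₀ ∈ Metric.ball (0:ℂ) 1 := ball_subset_ball hs1.le hz₀b
      have han : AnalyticAt ℂ f z₀ := (hd.analyticOnNhd isOpen_ball) z₀ hz₀1
      have hnotzero : ¬ (∀ᶠ z in nhds z₀, f z = 0) := by
        intro h
        have hEq := AnalyticOnNhd.eqOn_zero_of_preconnected_of_eventuallyEq_zero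
          (hd.analyticOnNhd isOpen_ball) (convex_ball (0:ℂ) 1).isPreconnected hz₀1 h
        exact hsph (s:ℂ) hsmem (hEq hs1mem)
      obtain ⟨k, g, hg_an, hg0, heqf⟩ := han.exists_eventuallyEq_pow_smul_nonzero_iff.mpr hnotzero
      have hk : k ≠ 0 := by
        rintro rfl
        apply hg0
        have := heqf.self_of_nhds
        simpa [hz₀f] using this.symm
      obtain ⟨j, rfl⟩ : ∃ j, k = j + 1 :=
        ⟨k - 1, (Nat.succ_pred_eq_of_pos (Nat.pos_of_ne_zero hk)).symm⟩
      set G : ℂ → ℂ := fun z => if z = z₀ then g z₀ else f z / (z - z₀) ^ (j+1) with hGdef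
      have hfG : ∀ z, f z = (z - z₀) ^ (j+1) * G z := by
        intro z
        by_cases h : z = z₀
        · subst h; simp [hGdef, hz₀f]
        · simp only [hGdef, if_neg h]
          rw [mul_comm, div_mul_cancel₀ _ (pow_ne_zero _ (sub_ne_zero.mpr h))]
      have hGg : G =ᶠ[nhds z₀] g := by
        filter_upwards [heqf] with z hz
        by_cases h : z = z₀
        · subst h; simp only [hGdef, if_pos rfl]
        · simp only [hGdef, if_neg h, hz, smul_eq_mul]
          rw [mul_comm, mul_div_assoc, div_self (pow_ne_zero _ (sub_ne_zero.mpr h)), mul_one]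
      have hGd : DifferentiableOn ℂ G (Metric.ball 0 1) := by
        intro z hz
        by_cases h : z = z₀
        · subst h
          exact ((hg_an.congr hGg.symm).differentiableAt).differentiableWithinAt
        · have hd1 : DifferentiableAt ℂ (fun w => f w / (w - z₀) ^ (j+1)) z :=
            DifferentiableAt.div (hd.differentiableAt (isOpen_ball.mem_nhds hz))
              ((differentiableAt_id.sub (differentiableAt_const _)).pow (j+1))
              (pow_ne_zero _ (sub_ne_zero.mpr h))
          have hev : G =ᶠ[nhds z] (fun w => f w / (w - z₀) ^ (j+1)) := by
            filter_upwards [eventually_ne_nhds h] with w hw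
            simp only [hGdef, if_neg hw]
          exact (hev.differentiableAt_iff.mpr hd1).differentiableWithinAt
      have hGsph : ∀ z ∈ Metric.sphere (0:ℂ) s, G z ≠ 0 := by
        intro z hzs h0
        exact hsph z hzs (by rw [hfG z, h0, mul_zero])
      have hGz₀ : G z₀ ≠ 0 := by simpa [hGdef] using hg0
      have hZG : {z ∈ Metric.closedBall (0:ℂ) s | G z = 0} ⊆ Z \ {z₀} := by
        rintro z ⟨hzc, hz0⟩
        have hne : z ≠ z₀ := by rintro rfl; exact hGz₀ hz0
        exact ⟨⟨hzc, by rw [hfG z, hz0, mul_zero]⟩, hne⟩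
      have hcardG : {z ∈ Metric.closedBall (0:ℂ) s | G z = 0}.ncard ≤ n := by
        have h1 : {z ∈ Metric.closedBall (0:ℂ) s | G z = 0}.ncard ≤ (Z \ {z₀}).ncard :=
          Set.ncard_le_ncard hZG hfin.diff
        have h2 : (Z \ {z₀}).ncard = Z.ncard - 1 :=
          Set.ncard_diff_singleton_of_mem ⟨hz₀c, hz₀f⟩
        have h3 : 0 < Z.ncard := (Set.ncard_pos hfin).mpr ⟨z₀, hz₀c, hz₀f⟩
        omega
      obtain ⟨m', hm', -⟩ := IH G hGd hGsph hcardG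
      -- pointwise identity on the sphere
      have hsub1 : Metric.sphere (0:ℂ) s ⊆ Metric.ball 0 1 := fun z hz => by
        rw [mem_ball_zero_iff, mem_sphere_zero_iff_norm.mp hz]; exact hs1
      have hptw : ∀ z ∈ Metric.sphere (0:ℂ) s,
          deriv f z / f z - ((j:ℂ)+1) * (z - z₀)⁻¹ = deriv G z / G z := by
        intro z hzs
        have hz1 : z ∈ Metric.ball (0:ℂ) 1 := hsub1 hzs
        have hzne : z ≠ z₀ := by
          rintro rfl
          exact (mem_ball_zero_iff.mp hz₀b).ne (mem_sphere_zero_iff_norm.mp hzs)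
        have hGz : G z ≠ 0 := hGsph z hzs
        have hGda : DifferentiableAt ℂ G z := hGd.differentiableAt (isOpen_ball.mem_nhds hz1)
        have hder : HasDerivAt f
            (((j:ℂ)+1) * (z - z₀) ^ j * G z + (z - z₀) ^ (j+1) * deriv G z) z := by
          have h1 : HasDerivAt (fun w => (w - z₀) ^ (j+1)) (((j:ℂ)+1) * (z - z₀) ^ j) z := by
            have := ((hasDerivAt_id z).sub_const z₀).pow (j+1)
            simp at this; exact this
          have h2 := h1.mul hGda.hasDerivAt
          have h3 : (fun w => (w - z₀) ^ (j+1) * G w) = f := by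
            funext w; rw [hfG w]
          rw [← h3]; exact h2
        rw [hder.deriv, hfG z]
        have hpow : (z - z₀) ^ (j+1) ≠ 0 := pow_ne_zero _ (sub_ne_zero.mpr hzne)
        have hsz : z - z₀ ≠ 0 := sub_ne_zero.mpr hzne
        field_simp
        ring
      -- integrability
      have hGcont : ContinuousOn (fun z => deriv G z / G z) (Metric.sphere (0:ℂ) s) :=
        ContinuousOn.div (((hGd.analyticOnNhd isOpen_ball).deriv.continuousOn).mono hsub1)
          (hGd.continuousOn.mono hsub1) hGsph
      have hGint : CircleIntegrable (fun z => deriv G z / G z) 0 s :=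
        hGcont.circleIntegrable hs0.le
      have hfint : CircleIntegrable (fun z => deriv f z / f z) 0 s :=
        (ContinuousOn.div (((hd.analyticOnNhd isOpen_ball).deriv.continuousOn).mono hsub1)
          (hd.continuousOn.mono hsub1) hsph).circleIntegrable hs0.le
      have hkcont : ContinuousOn (fun z : ℂ => ((j:ℂ)+1) * (z - z₀)⁻¹)
          (Metric.sphere (0:ℂ) s) := by
        refine continuousOn_const.mul (ContinuousOn.inv₀
          ((continuousOn_id.sub continuousOn_const)) ?_)
        intro z hzs
        refine sub_ne_zero.mpr ?_
        rintro rfl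
        exact (mem_ball_zero_iff.mp hz₀b).ne (mem_sphere_zero_iff_norm.mp hzs)
      have hkint : CircleIntegrable (fun z : ℂ => ((j:ℂ)+1) * (z - z₀)⁻¹) 0 s :=
        hkcont.circleIntegrable hs0.le
      have hsplit := circleIntegral.integral_sub hfint hkint
      have hcongr : (∮ z in C(0, s), (deriv f z / f z - ((j:ℂ)+1) * (z - z₀)⁻¹))
          = ∮ z in C(0, s), deriv G z / G z :=
        circleIntegral.integral_congr hs0.le (fun z hz => hptw z hz)
      have hinv : (∮ z in C(0, s), ((j:ℂ)+1) * (z - z₀)⁻¹)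
          = ((j:ℂ)+1) * (2 * Real.pi * Complex.I) := by
        rw [circleIntegral.integral_const_mul, circleIntegral.integral_sub_inv_of_mem_ball hz₀b]
      refine ⟨m' + (j+1), ?_, fun _ => by omega⟩
      have : (∮ z in C(0, s), deriv f z / f z)
          = (∮ z in C(0, s), deriv G z / G z) + ((j:ℂ)+1) * (2 * Real.pi * Complex.I) := by
        rw [← hcongr, hsplit, hinv]; ring
      rw [this, hm']
      push_cast
      ring

/-- A map `H₂` on the closed unit disk, continuous there, holomorphic inside,
with `|H₂| = 1` on the unit circle and `|H₂| ≤ 1` on the disk, whose boundary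
restriction has winding number `0` (expressed via a continuous angular lift `θ`
with `θ (2π) = θ 0`), is constant. -/
theorem constant_of_winding_zero
    (H₂ : ℂ → ℂ)
    (hc : ContinuousOn H₂ (Metric.closedBall 0 1))
    (hd : DifferentiableOn ℂ H₂ (Metric.ball 0 1))
    (hb : ∀ z : ℂ, ‖z‖ = 1 → ‖H₂ z‖ = 1)
    (hle : ∀ z : ℂ, ‖z‖ ≤ 1 → ‖H₂ z‖ ≤ 1)
    (θ : ℝ → ℝ) (hθ : Continuous θ)
    (hlift : ∀ φ : ℝ, H₂ (Complex.exp (φ * Complex.I)) = Complex.exp (θ φ * Complex.I))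
    (hdeg : θ (2 * Real.pi) = θ 0) :
    ∃ c : ℂ, ∀ z : ℂ, ‖z‖ ≤ 1 → H₂ z = c := by
  by_cases hzero : ∃ z ∈ Metric.closedBall (0:ℂ) 1, H₂ z = 0
  · exfalso
    -- uniform continuity
    have hucont := (isCompact_closedBall (0:ℂ) 1).uniformContinuousOn_of_continuous hc
    rw [Metric.uniformContinuousOn_iff] at hucont
    obtain ⟨δ, hδ0, hδ⟩ := hucont (1/2) (by norm_num)
    -- the zero set
    set Z : Set ℂ := {z ∈ Metric.closedBall (0:ℂ) 1 | H₂ z = 0} with hZdef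
    have hZne : Z.Nonempty := hzero
    have hZclosed : IsClosed Z :=
      hc.preimage_isClosed_of_isClosed Metric.isClosed_closedBall isClosed_singleton
    have hZcomp : IsCompact Z :=
      (isCompact_closedBall (0:ℂ) 1).of_isClosed_subset hZclosed (Set.sep_subset _ _)
    obtain ⟨zm, hzm, hmax⟩ := hZcomp.exists_isMaxOn hZne continuous_norm.continuousOn
    set r₀ : ℝ := ‖zm‖ with hr₀def
    have hr₀1 : r₀ < 1 := by
      rcases (mem_closedBall_zero_iff.mp hzm.1).lt_or_eq with h | h
      · exact h
      · exfalso
        have := hb zm h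
        rw [hzm.2] at this
        simp at this
    -- choice of s
    set a : ℝ := max r₀ (max (1 - δ) 0) with hadef
    have ha0 : 0 ≤ a := le_trans (le_max_right _ _) (le_max_right _ _)
    have ha1 : a < 1 := by
      apply max_lt hr₀1 (max_lt (by linarith) zero_lt_one)
    set s : ℝ := (a + 1) / 2 with hsdef
    have hs0 : 0 < s := by simp only [hsdef]; linarith
    have hsa : a < s := by simp only [hsdef]; linarith
    have hs1 : s < 1 := by simp only [hsdef]; linarith
    have hr₀s : r₀ < s := lt_of_le_of_lt (le_max_left _ _) hsa
    have h1s : 1 - s < δ := by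
      have : 1 - δ < s := lt_of_le_of_lt (le_trans (le_max_left _ _) (le_max_right _ _)) hsa
      linarith
    -- zeros have norm ≤ r₀
    have hZr : ∀ z ∈ Z, ‖z‖ ≤ r₀ := fun z hz => hmax hz
    have hsph : ∀ z ∈ Metric.sphere (0:ℂ) s, H₂ z ≠ 0 := by
      intro z hzs h0
      have hz1 : z ∈ Metric.closedBall (0:ℂ) 1 := by
        rw [mem_closedBall_zero_iff, mem_sphere_zero_iff_norm.mp hzs]; exact hs1.le
      have := hZr z ⟨hz1, h0⟩
      rw [mem_sphere_zero_iff_norm.mp hzs] at this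
      linarith
    -- the argument-principle integral is nonzero
    set Z' : Set ℂ := {z ∈ Metric.closedBall (0:ℂ) s | H₂ z = 0} with hZ'def
    have hZ'ne : Z'.Nonempty := by
      obtain ⟨z₀, hz₀⟩ := hZne
      exact ⟨z₀, by
        rw [mem_closedBall_zero_iff]
        exact le_trans (hZr z₀ hz₀) hr₀s.le, hz₀.2⟩
    obtain ⟨m, hint, hm1⟩ := arg_principle hs0 hs1 Z'.ncard H₂ hd hsph le_rfl
    have hm : 1 ≤ m := hm1 hZ'ne
    -- now show the integral is zero
    -- the circle path
    have hmemb : ∀ φ : ℝ, circleMap 0 s φ ∈ Metric.ball (0:ℂ) 1 := by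
      intro φ
      rw [mem_ball_zero_iff]
      have : ‖circleMap 0 s φ‖ = |s| := norm_circleMap_zero s φ
      rw [this, abs_of_pos hs0]; exact hs1
    have hmemc : ∀ φ : ℝ, circleMap 0 s φ ∈ Metric.closedBall (0:ℂ) 1 :=
      fun φ => ball_subset_closedBall (hmemb φ)
    set ψ : ℝ → ℂ := fun φ => H₂ (circleMap 0 s φ) with hψdef
    have hψne : ∀ φ, ψ φ ≠ 0 := fun φ => hsph _ (circleMap_mem_sphere 0 hs0.le φ)
    set ψd : ℝ → ℂ := fun φ => deriv H₂ (circleMap 0 s φ) * (circleMap 0 s φ * Complex.I)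
      with hψddef
    have hψd : ∀ φ, HasDerivAt ψ (ψd φ) φ := by
      intro φ
      have h1 : HasDerivAt H₂ (deriv H₂ (circleMap 0 s φ)) (circleMap 0 s φ) :=
        (hd.differentiableAt (isOpen_ball.mem_nhds (hmemb φ))).hasDerivAt
      exact h1.comp φ (hasDerivAt_circleMap 0 s φ)
    have hderivHcont : ContinuousOn (deriv H₂) (Metric.ball (0:ℂ) 1) :=
      (hd.analyticOnNhd isOpen_ball).deriv.continuousOn
    have hψcont : Continuous ψ :=
      hc.comp_continuous (continuous_circleMap 0 s) hmemc
    have hψdcont : Continuous ψd := by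
      apply Continuous.mul
      · exact hderivHcont.comp_continuous (continuous_circleMap 0 s) hmemb
      · exact (continuous_circleMap 0 s).mul continuous_const
    have hicont : Continuous (fun t => ψd t / ψ t) := hψdcont.div hψcont hψne
    set L : ℝ → ℂ := fun φ => ∫ t in (0:ℝ)..φ, ψd t / ψ t with hLdef
    have hL : ∀ φ, HasDerivAt L (ψd φ / ψ φ) φ := by
      intro φ
      exact (hicont.integral_hasStrictDerivAt 0 φ).hasDerivAt
    have hL0 : L 0 = 0 := intervalIntegral.integral_same
    -- constancy of ψ e^{-L}
    have hFd : ∀ φ, HasDerivAt (fun t => ψ t * Complex.exp (-L t)) 0 φ := by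
      intro φ
      have h1 := (hψd φ).mul (((hL φ).neg).cexp)
      convert h1 using 1
      · rfl
      · rfl
      · have hne := hψne φ
        have hc1 : ψ φ * (ψd φ / ψ φ) = ψd φ := mul_div_cancel₀ _ hne
        linear_combination (Complex.exp ((-L) φ)) * hc1
    have hFconst : ∀ φ, ψ φ * Complex.exp (-L φ) = ψ 0 := by
      have hconst := is_const_of_deriv_eq_zero (f := fun t => ψ t * Complex.exp (-L t))
        (fun x => (hFd x).differentiableAt) (fun x => (hFd x).deriv)
      intro φ
      have := hconst φ 0
      simpa [hL0] using this
    have hexpL : ∀ φ, Complex.exp (L φ) = ψ φ / ψ 0 := by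
      intro φ
      have h1 := hFconst φ
      rw [Complex.exp_neg] at h1
      rw [eq_div_iff (hψne 0), ← h1]
      field_simp
    -- the boundary lift comparison
    have hcirc1 : ∀ φ : ℝ, circleMap 0 1 φ = Complex.exp (φ * Complex.I) := by
      intro φ; simp [circleMap]
    set ratio : ℝ → ℂ := fun φ => ψ φ / Complex.exp (θ φ * Complex.I) with hratiodef
    have habs1 : ∀ φ : ℝ, ‖Complex.exp ((θ φ : ℂ) * Complex.I)‖ = 1 := by
      intro φ; exact Complex.norm_exp_ofReal_mul_I (θ φ)
    have hcirc1mem : ∀ φ : ℝ, circleMap 0 1 φ ∈ Metric.closedBall (0:ℂ) 1 := by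
      intro φ
      rw [mem_closedBall_zero_iff, norm_circleMap_zero]
      norm_num
    have hψ1 : ∀ φ : ℝ, H₂ (circleMap 0 1 φ) = Complex.exp ((θ φ : ℂ) * Complex.I) := by
      intro φ
      rw [hcirc1 φ]
      exact hlift φ
    have hclose : ∀ φ, ‖ratio φ - 1‖ < 1/2 := by
      intro φ
      have hxy : dist (circleMap 0 s φ) (circleMap 0 1 φ) < δ := by
        have hsub : circleMap 0 s φ - circleMap 0 1 φ
            = ((s:ℂ) - 1) * Complex.exp (φ * Complex.I) := by
          simp [circleMap]
          ring
        rw [Complex.dist_eq, hsub, norm_mul, Complex.norm_exp_ofReal_mul_I]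
        have habs : ‖(s:ℂ) - 1‖ = 1 - s := by
          rw [← Complex.ofReal_one, ← Complex.ofReal_sub, Complex.norm_real, Real.norm_eq_abs,
            abs_of_neg (by linarith)]
          ring
        rw [habs, mul_one]
        exact h1s
      have hdist := hδ _ (hmemc φ) _ (hcirc1mem φ) hxy
      rw [hψ1 φ] at hdist
      have hsub1 : ratio φ - 1 = (ψ φ - Complex.exp ((θ φ : ℂ) * Complex.I))
          / Complex.exp ((θ φ : ℂ) * Complex.I) := div_sub_one (Complex.exp_ne_zero _)
      rw [hsub1, norm_div, habs1 φ, div_one]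
      rw [Complex.dist_eq] at hdist
      exact hdist
    have hre : ∀ φ, 0 < (ratio φ).re := by
      intro φ
      have h1 : |(ratio φ - 1).re| ≤ ‖ratio φ - 1‖ := Complex.abs_re_le_norm _
      have h2 : (ratio φ).re = (ratio φ - 1).re + 1 := by simp [Complex.sub_re]
      have h3 := hclose φ
      rw [h2]
      have := abs_le.mp h1
      linarith [this.1]
    have hrne0 : ∀ φ, ratio φ ≠ 0 := by
      intro φ h
      have := hre φ
      rw [h] at this
      simp at this
    set M : ℝ → ℂ := fun φ => (θ φ : ℂ) * Complex.I + Complex.log (ratio φ) with hMdef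
    have hexpM : ∀ φ, Complex.exp (M φ) = ψ φ := by
      intro φ
      rw [hMdef]
      simp only
      rw [Complex.exp_add, Complex.exp_log (hrne0 φ), hratiodef]
      simp only
      rw [mul_div_cancel₀ _ (Complex.exp_ne_zero _)]
    have hratiocont : Continuous ratio :=
      hψcont.div ((Complex.continuous_ofReal.comp hθ).mul continuous_const).cexp
        (fun x => Complex.exp_ne_zero _)
    have hMcont : Continuous M := by
      apply Continuous.add ((Complex.continuous_ofReal.comp hθ).mul continuous_const)
      rw [continuous_iff_continuousAt]
      intro φ
      exact (continuousAt_clog (Complex.mem_slitPlane_iff.mpr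
        (Or.inl (hre φ)))).comp hratiocont.continuousAt
    have hLcont : Continuous L := by
      rw [continuous_iff_continuousAt]
      exact fun φ => (hL φ).continuousAt
    set h : ℝ → ℂ := fun φ => M φ - M 0 - L φ with hhdef
    have hh1 : ∀ φ, Complex.exp (h φ) = 1 := by
      intro φ
      rw [hhdef]
      simp only
      rw [Complex.exp_sub, Complex.exp_sub, hexpM, hexpM, hexpL]
      rw [div_self (div_ne_zero (hψne φ) (hψne 0))]
    have h2piI : (2 * (Real.pi:ℂ) * Complex.I) ≠ 0 := by
      simp [Real.pi_ne_zero, Complex.I_ne_zero]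
    set g : ℝ → ℝ := fun φ => ((h φ) / (2 * Real.pi * Complex.I)).re with hgdef
    have hint_g : ∀ φ, ∃ n : ℤ, g φ = n := by
      intro φ
      obtain ⟨n, hn⟩ := Complex.exp_eq_one_iff.mp (hh1 φ)
      refine ⟨n, ?_⟩
      rw [hgdef]
      simp only
      rw [hn, mul_div_cancel_right₀ _ h2piI]
      simp
    have hgcont : Continuous g :=
      Complex.continuous_re.comp (((hMcont.sub continuous_const).sub hLcont).div_const _)
    have hg00 : g 0 = 0 := by
      rw [hgdef, hhdef]
      simp [hL0]
    have hgT := int_valued_eq_zero hgcont hint_g hg00 (T := 2 * Real.pi)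
      (by positivity)
    have hh2π : h (2 * Real.pi) = 0 := by
      obtain ⟨n, hn⟩ := Complex.exp_eq_one_iff.mp (hh1 (2 * Real.pi))
      have hgval : g (2 * Real.pi) = (n : ℝ) := by
        rw [hgdef]
        simp only
        rw [hn, mul_div_cancel_right₀ _ h2piI]
        simp
      rw [hgT] at hgval
      have hn0 : (n : ℝ) = 0 := hgval.symm
      have : n = 0 := by exact_mod_cast hn0
      rw [hn, this]
      simp
    -- M is periodic at the endpoints
    have hcper : circleMap 0 s (2 * Real.pi) = circleMap 0 s 0 := by
      have := periodic_circleMap 0 s 0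
      simpa using this
    have hψper : ψ (2 * Real.pi) = ψ 0 := by
      rw [hψdef]
      simp only
      rw [hcper]
    have hMper : M (2 * Real.pi) = M 0 := by
      rw [hMdef]
      simp only
      rw [hdeg, hratiodef]
      simp only
      rw [hψper, hdeg]
    have hL2π : L (2 * Real.pi) = 0 := by
      have := hh2π
      rw [hhdef] at this
      simp only at this
      rw [hMper] at this
      simpa using this.symm
    -- identify the circle integral with L (2π)
    have hcircval : (∮ z in C(0, s), deriv H₂ z / H₂ z) = L (2 * Real.pi) := by
      rw [hLdef]
      simp only
      unfold circleIntegral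
      apply intervalIntegral.integral_congr
      intro t _
      simp only [deriv_circleMap, smul_eq_mul, hψddef, hψdef]
      ring
    rw [hcircval, hL2π] at hint
    have hmc : (m:ℂ) = 0 := by
      have h0 : 2 * (Real.pi:ℂ) * Complex.I * m = 0 := hint.symm
      rcases mul_eq_zero.mp h0 with h | h
      · exact absurd h h2piI
      · exact h
    have : m = 0 := by exact_mod_cast hmc
    omega
  · -- no zeros: maximum modulus
    have hne : ∀ z ∈ Metric.closedBall (0:ℂ) 1, H₂ z ≠ 0 := by
      intro z hz h0; exact hzero ⟨z, hz, h0⟩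
    have hclosure : closure (Metric.ball (0:ℂ) 1) = Metric.closedBall (0:ℂ) 1 :=
      closure_ball 0 one_ne_zero
    have hdiffcl : DiffContOnCl ℂ (fun z => (H₂ z)⁻¹) (Metric.ball 0 1) := by
      constructor
      · exact hd.inv (fun z hz => hne z (ball_subset_closedBall hz))
      · rw [hclosure]
        exact hc.inv₀ hne
    have hfrontier : frontier (Metric.ball (0:ℂ) 1) = Metric.sphere 0 1 :=
      frontier_ball 0 one_ne_zero
    have hbound : ∀ z ∈ Metric.closedBall (0:ℂ) 1, ‖(H₂ z)⁻¹‖ ≤ 1 := by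
      intro z hz
      apply Complex.norm_le_of_forall_mem_frontier_norm_le isBounded_ball hdiffcl
      · intro w hw
        rw [hfrontier] at hw
        rw [norm_inv, hb w (mem_sphere_zero_iff_norm.mp hw)]
        norm_num
      · rw [hclosure]; exact hz
    have hnorm1 : ∀ z ∈ Metric.closedBall (0:ℂ) 1, ‖H₂ z‖ = 1 := by
      intro z hz
      have h1 := hle z (mem_closedBall_zero_iff.mp hz)
      have h2 := hbound z hz
      rw [norm_inv] at h2
      have h3 : ‖H₂ z‖ ≠ 0 := fun h => hne z hz (norm_eq_zero.mp h)
      have h4 : 1 ≤ ‖H₂ z‖ := by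
        rw [inv_le_one_iff₀] at h2
        rcases h2 with h | h
        · exact absurd (le_antisymm h (norm_nonneg _)) h3
        · exact h
      linarith [le_antisymm h1 h4]
    have hmaxon : IsMaxOn (norm ∘ H₂) (Metric.ball 0 1) 0 := by
      intro z hz
      simp only [Function.comp_apply, Set.mem_setOf_eq]
      rw [hnorm1 z (ball_subset_closedBall hz),
        hnorm1 0 (ball_subset_closedBall (mem_ball_self one_pos))]
    have hEq := Complex.eqOn_closure_of_isPreconnected_of_isMaxOn_norm
      (convex_ball (0:ℂ) 1).isPreconnected isOpen_ball ⟨hd, by rwa [hclosure]⟩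
      (mem_ball_self one_pos) hmaxon
    refine ⟨H₂ 0, fun z hz => ?_⟩
    have : z ∈ closure (Metric.ball (0:ℂ) 1) := by
      rw [hclosure, mem_closedBall_zero_iff]; exact hz
    exact hEq this
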